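/- arXiv:1803.09624 — 5 statements merged into one kernel-verified Lean document; each statement's English description precedes it below -/
import Mathlib

section
/- In a fuzzy soft topological space, a fuzzy soft point e_x^α belongs to the closure of a fuzzy soft set f if and only if every fuzzy soft open Q-neighborhood of e_x^α is quasi-coincident with f. -/
open unitInterval

instance : Fact ((0:ℝ) ≤ 1) := ⟨zero_le_one⟩

/-- A fuzzy soft set over `(X, E)` is a map `E → X → [0,1]`. -/
abbrev FSS (X E : Type*) := E → X → I

/-- Quasi-coincidence of two fuzzy soft sets. -/
def FSS.QCoin {X E : Type*} (f g : FSS X E) : Prop :=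
  ∃ e x, 1 < (f e x : ℝ) + (g e x : ℝ)

/-- Complement of a fuzzy soft set. -/
noncomputable def FSS.compl {X E : Type*} (f : FSS X E) : FSS X E :=
  fun e x => symm (f e x)

open scoped Classical in
/-- The fuzzy soft point `e_x^α`. -/
noncomputable def fsPoint {X E : Type*} (e : E) (x : X) (α : I) : FSS X E :=
  fun e' x' => if e' = e ∧ x' = x then α else 0

/-- Preimage of a fuzzy soft set under the fuzzy soft mapping `(u, p)`. -/
def fsPreimage {X E Y K : Type*} (u : X → Y) (p : E → K) (g : FSS Y K) : FSS X E :=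
  fun e x => g (p e) (u x)

/-- Image of a fuzzy soft set under the fuzzy soft mapping `(u, p)`. -/
noncomputable def fsImage {X E Y K : Type*} (u : X → Y) (p : E → K) (f : FSS X E) : FSS Y K :=
  fun k y => ⨆ x ∈ u ⁻¹' {y}, ⨆ e ∈ p ⁻¹' {k}, f e x

/-- A fuzzy soft topology on `(X, E)`. -/
structure FSTopology (X E : Type*) where
  opens : Set (FSS X E)
  univ_mem : (fun _ _ => 1) ∈ opens
  null_mem : (fun _ _ => 0) ∈ opens
  inter_mem : ∀ f g, f ∈ opens → g ∈ opens → (fun e x => f e x ⊓ g e x) ∈ opens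
  sSup_mem : ∀ S ⊆ opens, (fun e x => ⨆ f ∈ S, f e x) ∈ opens

/-- A fuzzy soft set is closed iff its complement is open. -/
def FSTopology.IsClosed {X E : Type*} (τ : FSTopology X E) (f : FSS X E) : Prop :=
  f.compl ∈ τ.opens

/-- Closure: the pointwise infimum of all closed supersets. -/
noncomputable def FSTopology.closure {X E : Type*} (τ : FSTopology X E) (f : FSS X E) :
    FSS X E :=
  fun e x => ⨅ g ∈ {g : FSS X E | τ.IsClosed g ∧ f ≤ g}, g e x

theorem mem_closure_iff_qnbd_qcoin {X E : Type*} (τ : FSTopology X E)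
    (f : FSS X E) (e : E) (x : X) (α : I) (hα : 0 < α) :
    α ≤ τ.closure f e x ↔
      ∀ h ∈ τ.opens, 1 < (α : ℝ) + h e x → h.QCoin f := by
  constructor
  · intro hc h hopen hq
    by_contra hn
    have hfle : f ≤ h.compl := by
      intro e' x'
      have hle : (h e' x' : ℝ) + f e' x' ≤ 1 := by
        by_contra hgt
        exact hn ⟨e', x', by linarith⟩
      rw [← Subtype.coe_le_coe]
      simp only [FSS.compl, coe_symm_eq]
      linarith
    have hclosed : τ.IsClosed h.compl := by
      have : (h.compl).compl = h := by
        funext e' x'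
        simp [FSS.compl, symm_symm]
      unfold FSTopology.IsClosed
      rw [this]
      exact hopen
    have := hc.trans (iInf₂_le h.compl ⟨hclosed, hfle⟩)
    have : (α : ℝ) ≤ h.compl e x := this
    simp only [FSS.compl, coe_symm_eq] at this
    linarith
  · intro hq
    refine le_iInf₂ fun g hg => ?_
    by_contra hlt
    push_neg at hlt
    have hαg : (g e x : ℝ) < α := hlt
    have hopen : g.compl ∈ τ.opens := hg.1
    have hQ : 1 < (α : ℝ) + g.compl e x := by
      simp only [FSS.compl, coe_symm_eq]
      linarith
    obtain ⟨e', x', hqc⟩ := hq g.compl hopen hQ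
    simp only [FSS.compl, coe_symm_eq] at hqc
    have : (f e' x' : ℝ) ≤ g e' x' := hg.2 e' x'
    linarith
end

section
/- A fuzzy soft topological space (X,τ) is fuzzy soft q-T₁ if and only if every fuzzy soft point e_x^α is a fuzzy soft closed set. -/
open unitInterval

/-- Fuzzy soft `q`-`T₁`. -/
def FSTopology.QT1 {X E : Type*} (τ : FSTopology X E) : Prop :=
  ∀ (e₁ e₂ : E) (x y : X) (α β : I), 0 < α → 0 < β →
    ((e₁ ≠ e₂ ∨ x ≠ y) →
      (∃ f ∈ τ.opens, α ≤ f e₁ x ∧ (f e₂ y : ℝ) + β ≤ 1) ∧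
      (∃ g ∈ τ.opens, β ≤ g e₂ y ∧ (g e₁ x : ℝ) + α ≤ 1)) ∧
    ((e₁ = e₂ ∧ x = y ∧ α < β) →
      ∃ f ∈ τ.opens, 1 < (β : ℝ) + f e₂ y ∧ (α : ℝ) + f e₁ x ≤ 1)

theorem qT1_iff_points_closed {X E : Type*} (τ : FSTopology X E) :
    τ.QT1 ↔ ∀ (e : E) (x : X) (α : I), 0 < α → τ.IsClosed (fsPoint e x α) := by
  constructor
  · intro hT1 e x α hα
    set S : Set (FSS X E) :=
      {f | f ∈ τ.opens ∧ ∀ e' x', f e' x' ≤ (fsPoint e x α).compl e' x'} with hSdef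
    have hsub : S ⊆ τ.opens := fun f hf => hf.1
    have hopen := τ.sSup_mem S hsub
    have hmemS : ∀ f ∈ τ.opens, ((f e x : ℝ) + α ≤ 1) → f ∈ S := by
      intro f hf hfx
      refine ⟨hf, fun e'' x'' => ?_⟩
      by_cases h : e'' = e ∧ x'' = x
      · rw [h.1, h.2]
        have : (fsPoint e x α).compl e x = symm α := by simp [FSS.compl, fsPoint]
        rw [this, ← Subtype.coe_le_coe, coe_symm_eq]
        linarith
      · have : (fsPoint e x α).compl e'' x'' = 1 := by simp [FSS.compl, fsPoint, h]
        rw [this]; exact le_one'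
    have heq : (fun e' x' => ⨆ f ∈ S, f e' x') = (fsPoint e x α).compl := by
      funext e' x'
      apply le_antisymm
      · exact iSup₂_le fun f hf => hf.2 e' x'
      · by_contra hlt
        push_neg at hlt
        set s : I := ⨆ f ∈ S, f e' x' with hs
        by_cases hcase : e' = e ∧ x' = x
        · have hval : (fsPoint e x α).compl e' x' = symm α := by
            simp [FSS.compl, fsPoint, hcase.1, hcase.2]
          rw [hval] at hlt
          have hltR : (s : ℝ) < 1 - (α : ℝ) := by
            have := Subtype.coe_lt_coe.mpr hlt
            rwa [coe_symm_eq] at this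
          obtain ⟨r, hr1, hr2⟩ := exists_between hltR
          have hr0 : 0 ≤ r := le_trans s.2.1 hr1.le
          have hβmem : (1 : ℝ) - r ∈ Set.Icc (0:ℝ) 1 :=
            ⟨by linarith [α.2.1], by linarith⟩
          set β : I := ⟨1 - r, hβmem⟩ with hβdef
          have hαβ : α < β := by
            rw [← Subtype.coe_lt_coe]; simp [hβdef]; linarith
          obtain ⟨f, hfo, hf1, hf2⟩ :=
            (hT1 e e x x α β hα (lt_trans hα hαβ)).2 ⟨rfl, rfl, hαβ⟩
          have hfS : f ∈ S := hmemS f hfo (by linarith)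
          have : f e' x' ≤ s := le_iSup₂_of_le f hfS le_rfl
          rw [hcase.1, hcase.2] at this
          have := Subtype.coe_le_coe.mpr this
          have hβc : (β : ℝ) = 1 - r := rfl
          rw [hβc] at hf1
          linarith
        · have hval : (fsPoint e x α).compl e' x' = 1 := by
            simp [FSS.compl, fsPoint, hcase]
          rw [hval] at hlt
          have hltR : (s : ℝ) < 1 := by
            have := Subtype.coe_lt_coe.mpr hlt
            simpa using this
          obtain ⟨r, hr1, hr2⟩ := exists_between hltR
          have hr0 : 0 ≤ r := le_trans s.2.1 hr1.le
          set β : I := ⟨r, hr0, hr2.le⟩ with hβdef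
          have hβpos : 0 < β := by
            rw [← Subtype.coe_lt_coe]
            exact lt_of_le_of_lt s.2.1 hr1
          have hne : e' ≠ e ∨ x' ≠ x := by
            rcases not_and_or.mp hcase with h | h
            exacts [Or.inl h, Or.inr h]
          obtain ⟨⟨f, hfo, hf1, hf2⟩, -⟩ := (hT1 e' e x' x β α hβpos hα).1 hne
          have hfS : f ∈ S := hmemS f hfo hf2
          have : f e' x' ≤ s := le_iSup₂_of_le f hfS le_rfl
          have h1 := Subtype.coe_le_coe.mpr this
          have h2 := Subtype.coe_le_coe.mpr hf1
          have hβc : (β : ℝ) = r := rfl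
          rw [hβc] at h2
          linarith
    rw [heq] at hopen
    exact hopen
  · intro hcl e₁ e₂ x y α β hα hβ
    constructor
    · intro hne
      have hne' : ¬(e₁ = e₂ ∧ x = y) := by
        rcases hne with h | h
        · exact fun hc => h hc.1
        · exact fun hc => h hc.2
      have hne'' : ¬(e₂ = e₁ ∧ y = x) := by
        rcases hne with h | h
        · exact fun hc => h hc.1.symm
        · exact fun hc => h hc.2.symm
      constructor
      · refine ⟨(fsPoint e₂ y β).compl, hcl e₂ y β hβ, ?_, ?_⟩
        · have : (fsPoint e₂ y β).compl e₁ x = 1 := by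
            simp [FSS.compl, fsPoint, hne']
          rw [this]; exact le_one'
        · have : (fsPoint e₂ y β).compl e₂ y = symm β := by
            simp [FSS.compl, fsPoint]
          rw [this, coe_symm_eq]; linarith
      · refine ⟨(fsPoint e₁ x α).compl, hcl e₁ x α hα, ?_, ?_⟩
        · have : (fsPoint e₁ x α).compl e₂ y = 1 := by
            simp [FSS.compl, fsPoint, hne'']
          rw [this]; exact le_one'
        · have : (fsPoint e₁ x α).compl e₁ x = symm α := by
            simp [FSS.compl, fsPoint]
          rw [this, coe_symm_eq]; linarith
    · rintro ⟨rfl, rfl, hαβ⟩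
      refine ⟨(fsPoint e₁ x α).compl, hcl e₁ x α hα, ?_, ?_⟩
      · have : (fsPoint e₁ x α).compl e₁ x = symm α := by simp [FSS.compl, fsPoint]
        rw [this, coe_symm_eq]
        have := Subtype.coe_lt_coe.mpr hαβ
        linarith
      · have : (fsPoint e₁ x α).compl e₁ x = symm α := by simp [FSS.compl, fsPoint]
        rw [this, coe_symm_eq]; linarith
end

section
/- A fuzzy soft topological space (X,τ) is fuzzy soft q-T₂ if and only if every fuzzy soft point e_x^α equals the infimum of the closures of all fuzzy soft neighborhoods of e_x^α. -/
open unitInterval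

/-- Fuzzy soft `q`-`T₂`. -/
def FSTopology.QT2 {X E : Type*} (τ : FSTopology X E) : Prop :=
  ∀ (e₁ e₂ : E) (x y : X) (α β : I), 0 < α → 0 < β →
    ((e₁ ≠ e₂ ∨ x ≠ y) →
      ∃ f ∈ τ.opens, ∃ g ∈ τ.opens, α ≤ f e₁ x ∧ β ≤ g e₂ y ∧ ¬ f.QCoin g) ∧
    ((e₁ = e₂ ∧ x = y ∧ α < β) →
      ∃ f ∈ τ.opens, ∃ g ∈ τ.opens, α ≤ f e₁ x ∧ 1 < (β : ℝ) + g e₂ y ∧ ¬ f.QCoin g)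

section Aux

open unitInterval

variable {X E : Type*}

lemma I_le_symm_iff (a b : I) : a ≤ symm b ↔ (a:ℝ) + (b:ℝ) ≤ 1 := by
  rw [← Subtype.coe_le_coe, coe_symm_eq]
  constructor <;> intro h <;> linarith

lemma I_symm_le_iff (a b : I) : symm a ≤ b ↔ symm b ≤ a := by
  rw [← Subtype.coe_le_coe, ← Subtype.coe_le_coe, coe_symm_eq, coe_symm_eq]
  constructor <;> intro h <;> linarith

lemma I_le_symm_comm (a b : I) : a ≤ symm b ↔ b ≤ symm a := by
  rw [I_le_symm_iff, I_le_symm_iff]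
  constructor <;> intro h <;> linarith

lemma I_symm_anti {a b : I} (h : a ≤ b) : symm b ≤ symm a := by
  rw [← Subtype.coe_le_coe, coe_symm_eq, coe_symm_eq]
  rw [← Subtype.coe_le_coe] at h
  linarith

lemma I_symm_biInf {ι : Type*} (S : Set ι) (h : ι → I) :
    symm (⨅ i ∈ S, h i) = ⨆ i ∈ S, symm (h i) := by
  apply le_antisymm
  · rw [I_symm_le_iff]
    refine le_iInf₂ fun i hi => ?_
    rw [I_symm_le_iff]
    exact le_iSup₂ (f := fun i (_ : i ∈ S) => symm (h i)) i hi
  · exact iSup₂_le fun i hi => I_symm_anti (iInf₂_le i hi)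

lemma fss_compl_compl (g : FSS X E) : g.compl.compl = g := by
  funext e x
  exact symm_symm (g e x)

lemma fss_isClosed_compl (τ : FSTopology X E) {g : FSS X E} (hg : g ∈ τ.opens) :
    τ.IsClosed g.compl := by
  unfold FSTopology.IsClosed
  rw [fss_compl_compl]
  exact hg

lemma fss_le_closure (τ : FSTopology X E) (f : FSS X E) : f ≤ τ.closure f := by
  intro e
  intro x
  exact le_iInf₂ fun g hg => hg.2 e x

lemma fss_closure_le (τ : FSTopology X E) {f k : FSS X E} (hk : τ.IsClosed k) (hfk : f ≤ k) :
    τ.closure f ≤ k := by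
  intro e
  intro x
  exact iInf₂_le k ⟨hk, hfk⟩

lemma fss_closure_mono (τ : FSTopology X E) {f g : FSS X E} (h : f ≤ g) :
    τ.closure f ≤ τ.closure g := by
  intro e
  intro x
  refine le_iInf₂ fun k hk => ?_
  have hm : τ.IsClosed k ∧ f ≤ k := ⟨hk.1, le_trans h hk.2⟩
  exact iInf₂_le k hm

lemma fss_isClosed_closure (τ : FSTopology X E) (f : FSS X E) : τ.IsClosed (τ.closure f) := by
  unfold FSTopology.IsClosed
  have hsub : FSS.compl '' {g : FSS X E | τ.IsClosed g ∧ f ≤ g} ⊆ τ.opens := by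
    rintro u ⟨g, hg, rfl⟩
    exact hg.1
  have h := τ.sSup_mem _ hsub
  have heq : (τ.closure f).compl
      = fun e x => ⨆ u ∈ FSS.compl '' {g : FSS X E | τ.IsClosed g ∧ f ≤ g}, u e x := by
    funext e x
    show symm (⨅ g ∈ {g : FSS X E | τ.IsClosed g ∧ f ≤ g}, g e x) = _
    rw [I_symm_biInf]
    apply le_antisymm
    · refine iSup₂_le fun g hg => ?_
      have hm : g.compl ∈ FSS.compl '' {g : FSS X E | τ.IsClosed g ∧ f ≤ g} := ⟨g, hg, rfl⟩
      exact le_iSup₂ (f := fun (u : FSS X E)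
        (_ : u ∈ FSS.compl '' {g : FSS X E | τ.IsClosed g ∧ f ≤ g}) => u e x) g.compl hm
    · refine iSup₂_le ?_
      rintro u ⟨g, hg, rfl⟩
      exact le_iSup₂ (f := fun g (_ : g ∈ _) => symm (g e x)) g hg
  rw [heq]
  exact h

lemma fss_notQCoin_le {f g : FSS X E} (h : ¬ f.QCoin g) : f ≤ g.compl := by
  intro e
  intro x
  have hx : ¬ (1 < (f e x : ℝ) + (g e x : ℝ)) := fun hgt => h ⟨e, x, hgt⟩
  exact (I_le_symm_iff _ _).mpr (not_lt.mp hx)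

/-- Decreasing chain of finite intersections. -/
noncomputable def fssChain (V : ℕ → FSS X E) : ℕ → FSS X E
  | 0 => V 0
  | n+1 => fun e z => fssChain V n e z ⊓ V (n+1) e z

lemma fssChain_open (τ : FSTopology X E) (V : ℕ → FSS X E) (hV : ∀ n, V n ∈ τ.opens) :
    ∀ n, fssChain V n ∈ τ.opens
  | 0 => hV 0
  | n+1 => τ.inter_mem _ _ (fssChain_open τ V hV n) (hV (n+1))

lemma fssChain_succ_le (V : ℕ → FSS X E) (n : ℕ) : fssChain V (n+1) ≤ fssChain V n := by
  intro e
  intro z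
  exact inf_le_left

lemma fssChain_le_chain (V : ℕ → FSS X E) {m n : ℕ} (h : m ≤ n) :
    fssChain V n ≤ fssChain V m := by
  induction h with
  | refl => exact le_refl _
  | step _ ih => exact le_trans (fssChain_succ_le V _) ih
lemma fssChain_le_self (V : ℕ → FSS X E) : ∀ n, fssChain V n ≤ V n
  | 0 => le_refl _
  | n+1 => by intro e; intro z; exact inf_le_right

lemma fssChain_le (V : ℕ → FSS X E) {m n : ℕ} (h : m ≤ n) : fssChain V n ≤ V m :=
  le_trans (fssChain_le_chain V h) (fssChain_le_self V m)

lemma fssChain_one (V : ℕ → FSS X E) {e : E} {x : X} (h1 : ∀ n, (1:I) ≤ V n e x) :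
    ∀ n, (1:I) ≤ fssChain V n e x
  | 0 => h1 0
  | n+1 => le_inf (fssChain_one V h1 n) (h1 (n+1))

/-- The sequence ε n = 1/(n+1) inside the unit interval. -/
noncomputable def Ieps (n : ℕ) : I :=
  ⟨1 / ((n:ℝ) + 1), by
    constructor
    · positivity
    · rw [div_le_one (by positivity)]
      have : (0:ℝ) ≤ (n:ℝ) := Nat.cast_nonneg n
      linarith⟩

lemma Ieps_pos (n : ℕ) : 0 < Ieps n := by
  rw [← Subtype.coe_lt_coe]
  show (0:ℝ) < 1 / ((n:ℝ) + 1)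
  positivity

end Aux

section Main

open unitInterval

variable {X E : Type*}

/-- From the hypothesis that points equal the inf of closures of their neighborhoods,
extract arbitrarily good open neighborhoods. -/
lemma fss_key (τ : FSTopology X E)
    (H : ∀ (e : E) (x : X) (α : I), 0 < α →
      fsPoint e x α = fun e' x' =>
        ⨅ f ∈ {f : FSS X E | ∃ h ∈ τ.opens, α ≤ h e x ∧ h ≤ f}, τ.closure f e' x')
    (e₁ : E) (x : X) (e₂ : E) (y : X) (hne : ¬(e₂ = e₁ ∧ y = x)) (ε : I) (hε : 0 < ε) :
    ∃ h, h ∈ τ.opens ∧ (1:I) ≤ h e₁ x ∧ τ.closure h e₂ y < ε := by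
  have h0 := congrFun (congrFun (H e₁ x 1 (by rw [← Subtype.coe_lt_coe]; norm_num)) e₂) y
  simp only [fsPoint] at h0
  rw [if_neg hne] at h0
  by_contra hcon
  push_neg at hcon
  have hle : ε ≤ (0:I) := by
    rw [h0]
    refine le_iInf₂ ?_
    rintro f ⟨h, hho, hh1, hhf⟩
    exact le_trans (hcon h hho hh1) (fss_closure_mono τ hhf e₂ y)
  exact absurd (lt_of_lt_of_le hε hle) (lt_irrefl _)

/-- Building block for the separating open sets. -/
noncomputable def fssF (τ : FSTopology X E) (V U : ℕ → FSS X E) (n : ℕ) : FSS X E :=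
  fun e z => fssChain V n e z ⊓ (τ.closure (fssChain U n)).compl e z

/-- The separating open set: union of the building blocks. -/
noncomputable def fssA (τ : FSTopology X E) (V U : ℕ → FSS X E) : FSS X E :=
  fun e z => ⨆ u ∈ Set.range (fssF τ V U), u e z

lemma fssA_open (τ : FSTopology X E) (V U : ℕ → FSS X E)
    (hV : ∀ n, V n ∈ τ.opens) (_hU : ∀ n, U n ∈ τ.opens) : fssA τ V U ∈ τ.opens := by
  have hsub : Set.range (fssF τ V U) ⊆ τ.opens := by
    rintro u ⟨n, rfl⟩
    exact τ.inter_mem _ _ (fssChain_open τ V hV n) (fss_isClosed_closure τ (fssChain U n))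
  exact τ.sSup_mem _ hsub

lemma fssF_pairwise (τ : FSTopology X E) (V U : ℕ → FSS X E) (n m : ℕ) (e : E) (z : X) :
    fssF τ V U n e z ≤ symm (fssF τ U V m e z) := by
  rcases le_total n m with h | h
  · have h1 : fssF τ U V m e z ≤ τ.closure (fssChain U n) e z :=
      le_trans inf_le_left (le_trans (fssChain_le_chain U h e z) (fss_le_closure τ _ e z))
    have h2 : fssF τ V U n e z ≤ symm (τ.closure (fssChain U n) e z) := inf_le_right
    exact le_trans h2 (I_symm_anti h1)
  · have h1 : fssF τ V U n e z ≤ τ.closure (fssChain V m) e z :=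
      le_trans inf_le_left (le_trans (fssChain_le_chain V h e z) (fss_le_closure τ _ e z))
    have h2 : fssF τ U V m e z ≤ symm (τ.closure (fssChain V m) e z) := inf_le_right
    exact le_trans h1 ((I_le_symm_comm _ _).mp h2)

lemma fssA_notQCoin (τ : FSTopology X E) (V U : ℕ → FSS X E) :
    ¬ (fssA τ V U).QCoin (fssA τ U V) := by
  rintro ⟨e, z, hgt⟩
  have hle : fssA τ V U e z ≤ symm (fssA τ U V e z) := by
    show (⨆ u ∈ Set.range (fssF τ V U), u e z) ≤ symm (fssA τ U V e z)
    refine iSup₂_le ?_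
    rintro u ⟨n, rfl⟩
    rw [I_le_symm_comm]
    show (⨆ u ∈ Set.range (fssF τ U V), u e z) ≤ symm (fssF τ V U n e z)
    refine iSup₂_le ?_
    rintro v ⟨m, rfl⟩
    exact fssF_pairwise τ U V m n e z
  rw [I_le_symm_iff] at hle
  exact absurd hgt (not_lt.mpr hle)

lemma fssA_one (τ : FSTopology X E) (V U : ℕ → FSS X E) (e₁ : E) (x : X)
    (hV1 : ∀ n, (1:I) ≤ V n e₁ x) (hUc : ∀ n, τ.closure (U n) e₁ x < Ieps n) :
    (1:I) ≤ fssA τ V U e₁ x := by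
  have hn : ∀ n, symm (Ieps n) ≤ fssA τ V U e₁ x := by
    intro n
    have hmem : fssF τ V U n ∈ Set.range (fssF τ V U) := ⟨n, rfl⟩
    have hstep : fssF τ V U n e₁ x ≤ fssA τ V U e₁ x := by
      show fssF τ V U n e₁ x ≤ ⨆ u ∈ Set.range (fssF τ V U), u e₁ x
      exact le_iSup₂ (f := fun (u : FSS X E) (_ : u ∈ Set.range (fssF τ V U)) => u e₁ x)
        (fssF τ V U n) hmem
    refine le_trans ?_ hstep
    show symm (Ieps n) ≤ fssChain V n e₁ x ⊓ (τ.closure (fssChain U n)).compl e₁ x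
    apply le_inf
    · exact le_trans le_one' (fssChain_one V hV1 n)
    · show symm (Ieps n) ≤ symm (τ.closure (fssChain U n) e₁ x)
      exact I_symm_anti (le_of_lt (lt_of_le_of_lt
        (fss_closure_mono τ (fssChain_le_self U n) e₁ x) (hUc n)))
  refine Subtype.coe_le_coe.mp ?_
  have hone : ((1:I):ℝ) = 1 := by norm_num
  rw [hone]
  by_contra hlt
  push_neg at hlt
  obtain ⟨n, hn2⟩ := exists_nat_one_div_lt (show (0:ℝ) < 1 - (fssA τ V U e₁ x : ℝ) by linarith)
  have h3 := Subtype.coe_le_coe.mpr (hn n)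
  rw [coe_symm_eq] at h3
  have h4 : (Ieps n : ℝ) = 1 / ((n:ℝ) + 1) := rfl
  rw [h4] at h3
  linarith

end Main

theorem qT2_iff_point_eq_inf_closures_of_nbds {X E : Type*} (τ : FSTopology X E) :
    τ.QT2 ↔ ∀ (e : E) (x : X) (α : I), 0 < α →
      fsPoint e x α = fun e' x' =>
        ⨅ f ∈ {f : FSS X E | ∃ h ∈ τ.opens, α ≤ h e x ∧ h ≤ f},
          τ.closure f e' x' := by
  constructor
  · -- forward direction
    intro hT2 e x α hα
    funext e' x'
    simp only [fsPoint]
    by_cases hc : e' = e ∧ x' = x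
    · rw [if_pos hc]
      obtain ⟨rfl, rfl⟩ := hc
      apply le_antisymm
      · refine le_iInf₂ ?_
        rintro f ⟨h, hho, hhx, hhf⟩
        exact le_trans hhx (le_trans (hhf e' x') (fss_le_closure τ f e' x'))
      · by_contra hgt
        push_neg at hgt
        obtain ⟨f, hf, g, hg, hαf, hβg, hq⟩ :=
          (hT2 e' e' x' x' α _ hα (lt_of_le_of_lt (zero_le') hgt)).2 ⟨rfl, rfl, hgt⟩
        have hcl : τ.closure f ≤ g.compl :=
          fss_closure_le τ (fss_isClosed_compl τ hg) (fss_notQCoin_le hq)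
        have hm : f ∈ {f : FSS X E | ∃ h ∈ τ.opens, α ≤ h e' x' ∧ h ≤ f} :=
          ⟨f, hf, hαf, le_refl f⟩
        have h1 : (⨅ f ∈ {f : FSS X E | ∃ h ∈ τ.opens, α ≤ h e' x' ∧ h ≤ f},
            τ.closure f e' x') ≤ τ.closure f e' x' := iInf₂_le f hm
        have h2 : (⨅ f ∈ {f : FSS X E | ∃ h ∈ τ.opens, α ≤ h e' x' ∧ h ≤ f},
            τ.closure f e' x') ≤ g.compl e' x' := le_trans h1 (hcl e' x')
        have h2' := Subtype.coe_le_coe.mpr h2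
        rw [show ((g.compl e' x' : I) : ℝ) = 1 - (g e' x' : ℝ) from coe_symm_eq _] at h2'
        linarith
    · rw [if_neg hc]
      apply le_antisymm
      · exact zero_le'
      · by_contra hgt
        push_neg at hgt
        have hne : e ≠ e' ∨ x ≠ x' := by
          rcases not_and_or.mp hc with h | h
          · exact Or.inl (fun hh => h hh.symm)
          · exact Or.inr (fun hh => h hh.symm)
        obtain ⟨f, hf, g, hg, hαf, hβg, hq⟩ :=
          (hT2 e e' x x' α 1 hα (by rw [← Subtype.coe_lt_coe]; norm_num)).1 hne
        have hcl : τ.closure f ≤ g.compl :=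
          fss_closure_le τ (fss_isClosed_compl τ hg) (fss_notQCoin_le hq)
        have hm : f ∈ {f : FSS X E | ∃ h ∈ τ.opens, α ≤ h e x ∧ h ≤ f} :=
          ⟨f, hf, hαf, le_refl f⟩
        have h1 : (⨅ f ∈ {f : FSS X E | ∃ h ∈ τ.opens, α ≤ h e x ∧ h ≤ f},
            τ.closure f e' x') ≤ τ.closure f e' x' := iInf₂_le f hm
        have h3 : g e' x' = 1 := le_antisymm le_one' hβg
        have h2 : τ.closure f e' x' ≤ (0:I) := by
          have := hcl e' x'
          rw [show g.compl e' x' = symm (g e' x') from rfl, h3, symm_one] at this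
          exact this
        exact absurd (lt_of_lt_of_le hgt (le_trans h1 h2)) (lt_irrefl _)
  · -- reverse direction
    intro H e₁ e₂ x y α β hα hβ
    constructor
    · intro hne
      have hne2 : ¬(e₂ = e₁ ∧ y = x) := by
        rintro ⟨h1, h2⟩
        rcases hne with h | h
        · exact h h1.symm
        · exact h h2.symm
      have hne1 : ¬(e₁ = e₂ ∧ x = y) := by
        rintro ⟨h1, h2⟩
        rcases hne with h | h
        · exact h h1
        · exact h h2
      choose V hVo hV1 hVc using fun n => fss_key τ H e₁ x e₂ y hne2 (Ieps n) (Ieps_pos n)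
      choose U hUo hU1 hUc using fun n => fss_key τ H e₂ y e₁ x hne1 (Ieps n) (Ieps_pos n)
      exact ⟨fssA τ V U, fssA_open τ V U hVo hUo, fssA τ U V, fssA_open τ U V hUo hVo,
        le_trans le_one' (fssA_one τ V U e₁ x hV1 hUc),
        le_trans le_one' (fssA_one τ U V e₂ y hU1 hVc),
        fssA_notQCoin τ V U⟩
    · rintro ⟨h1, h2, hab⟩
      subst h1
      subst h2
      have h0 := congrFun (congrFun (H e₁ x α hα) e₁) x
      simp only [fsPoint] at h0
      rw [if_pos ⟨trivial, trivial⟩] at h0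
      have hex : ∃ f, f ∈ {f : FSS X E | ∃ h ∈ τ.opens, α ≤ h e₁ x ∧ h ≤ f}
          ∧ τ.closure f e₁ x < β := by
        by_contra hcon
        push_neg at hcon
        have hba : β ≤ α := by
          rw [h0]
          exact le_iInf₂ fun f hf => hcon f hf
        exact absurd hab (not_lt.mpr hba)
      obtain ⟨f, ⟨h, hho, hh1, hhf⟩, hflt⟩ := hex
      have hhlt : τ.closure h e₁ x < β := lt_of_le_of_lt (fss_closure_mono τ hhf e₁ x) hflt
      refine ⟨h, hho, (τ.closure h).compl, fss_isClosed_closure τ h, hh1, ?_, ?_⟩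
      · show 1 < (β:ℝ) + ((τ.closure h).compl e₁ x : ℝ)
        rw [show (((τ.closure h).compl e₁ x : I) : ℝ) = 1 - (τ.closure h e₁ x : ℝ)
          from coe_symm_eq _]
        have := Subtype.coe_lt_coe.mpr hhlt
        linarith
      · rintro ⟨e, z, hgt⟩
        have hle := Subtype.coe_le_coe.mpr (fss_le_closure τ h e z)
        rw [show (((τ.closure h).compl e z : I) : ℝ) = 1 - (τ.closure h e z : ℝ)
          from coe_symm_eq _] at hgt
        linarith
end

section
/- Let (X,τ₁) and (Y,τ₂) be fuzzy soft topological spaces with (Y,τ₂) fuzzy soft q-T₂, and let (u,p) with u : X → Y injective, p : E → K injective define a fuzzy soft continuous mapping (preimages of open sets are open). Then (X,τ₁) is fuzzy soft q-T₂. -/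
open unitInterval

/-- Fuzzy soft continuity of the fuzzy soft mapping `(u, p)`. -/
def FSContinuous {X E Y K : Type*} (τ₁ : FSTopology X E) (τ₂ : FSTopology Y K)
    (u : X → Y) (p : E → K) : Prop :=
  ∀ g ∈ τ₂.opens, fsPreimage u p g ∈ τ₁.opens

theorem qT2_of_injective_continuous {X E Y K : Type*}
    (τ₁ : FSTopology X E) (τ₂ : FSTopology Y K) (u : X → Y) (p : E → K)
    (hu : Function.Injective u) (hp : Function.Injective p)
    (hcont : FSContinuous τ₁ τ₂ u p) (hT2 : τ₂.QT2) : τ₁.QT2 := by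
  intro e₁ e₂ x y α β hα hβ
  obtain ⟨h1, h2⟩ := hT2 (p e₁) (p e₂) (u x) (u y) α β hα hβ
  constructor
  · intro hne
    have : p e₁ ≠ p e₂ ∨ u x ≠ u y := by
      rcases hne with h | h
      · exact Or.inl (fun hh => h (hp hh))
      · exact Or.inr (fun hh => h (hu hh))
    obtain ⟨f, hf, g, hg, hfx, hgy, hq⟩ := h1 this
    exact ⟨fsPreimage u p f, hcont f hf, fsPreimage u p g, hcont g hg, hfx, hgy,
      fun ⟨e, z, hez⟩ => hq ⟨p e, u z, hez⟩⟩
  · rintro ⟨rfl, rfl, hab⟩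
    obtain ⟨f, hf, g, hg, hfx, hgy, hq⟩ := h2 ⟨rfl, rfl, hab⟩
    exact ⟨fsPreimage u p f, hcont f hf, fsPreimage u p g, hcont g hg, hfx, hgy,
      fun ⟨e, z, hez⟩ => hq ⟨p e, u z, hez⟩⟩
end

section
/- For a fuzzy soft mapping (u,p) between fuzzy soft topological spaces (X,τ₁) and (Y,τ₂): (u,p) is fuzzy soft continuous if and only if for every fuzzy soft point e_x^α of (X,E) and every open Q-neighborhood g of its image point p(e)_{u(x)}^α in (Y,τ₂), there exists an open Q-neighborhood f of e_x^α in (X,τ₁) with image of f ⊑ g. -/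
open unitInterval

theorem continuous_iff_qnbd {X E Y K : Type*}
    (τ₁ : FSTopology X E) (τ₂ : FSTopology Y K) (u : X → Y) (p : E → K) :
    FSContinuous τ₁ τ₂ u p ↔
      ∀ (e : E) (x : X) (α : I), 0 < α →
        ∀ g ∈ τ₂.opens, 1 < (α : ℝ) + g (p e) (u x) →
          ∃ f ∈ τ₁.opens, 1 < (α : ℝ) + f e x ∧ fsImage u p f ≤ g := by
  have key : ∀ (f : FSS X E) (g : FSS Y K), fsImage u p f ≤ g → f ≤ fsPreimage u p g := by
    intro f g hfg e x
    refine le_trans ?_ (hfg (p e) (u x))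
    exact le_iSup₂_of_le x rfl (le_iSup₂_of_le e rfl le_rfl)
  constructor
  · intro hc e x α hα g hg hq
    refine ⟨fsPreimage u p g, hc g hg, hq, ?_⟩
    intro k y
    apply iSup₂_le; intro x' hx'
    apply iSup₂_le; intro e' he'
    simp only [Set.mem_preimage, Set.mem_singleton_iff] at hx' he'
    simp [fsPreimage, hx', he']
  · intro h g hg
    set S : Set (FSS X E) := {f | f ∈ τ₁.opens ∧ f ≤ fsPreimage u p g} with hS
    have hopen := τ₁.sSup_mem S (fun f hf => hf.1)
    have heq : fsPreimage u p g = fun e x => ⨆ f ∈ S, f e x := by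
      funext e x
      apply le_antisymm
      · by_contra hlt
        push_neg at hlt
        set s : I := ⨆ f ∈ S, f e x with hs
        have hs1 : s < 1 := lt_of_lt_of_le hlt le_one'
        have hq : 1 < ((symm s : I) : ℝ) + g (p e) (u x) := by
          have : (s : ℝ) < g (p e) (u x) := hlt
          simp only [coe_symm_eq]
          linarith
        have hpos : 0 < symm s := by
          rw [← symm_one]
          exact (symm_lt_symm).mpr hs1
        obtain ⟨f, hfo, hfq, hfle⟩ := h e x (symm s) hpos g hg hq
        have hmem : f ∈ S := ⟨hfo, key f g hfle⟩
        have h1 : f e x ≤ s := le_iSup₂_of_le f hmem le_rfl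
        have h2 : (s : ℝ) < f e x := by
          simp only [coe_symm_eq] at hfq
          linarith
        exact absurd (Subtype.coe_le_coe.mpr h1) (not_le.mpr h2)
      · exact iSup₂_le fun f hf => hf.2 e x
    rw [heq]; exact hopen
end
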